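/- arXiv:1210.2456 — 2 statements merged into one kernel-verified Lean document; each statement's English description precedes it below -/
import Mathlib

section
/- For every KAT expression e, the set of all partial derivatives of e by all words, Δ̂_{(At·Σ)*}(e) = ∪_{x ∈ (At·Σ)*} Δ̂_x(e), is a finite set. -/
namespace KAT

variable {T A : Type} [DecidableEq A]

/-- Atoms: truth assignments to the primitive tests. -/
abbrev Atom (T : Type) := T → Bool

/-- A guarded string `α₁p₁α₂p₂⋯p_{n-1}αₙ`, as the list of (atom, action)
pairs together with the final atom. -/
structure GStr (T A : Type) where
  pairs : List (Atom T × A)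
  last : Atom T

/-- The first atom of a guarded string. -/
def GStr.first (x : GStr T A) : Atom T :=
  match x.pairs with
  | [] => x.last
  | (α, _) :: _ => α

/-- Fusion product on sets of guarded strings. -/
def fprod (X Y : Set (GStr T A)) : Set (GStr T A) :=
  {z | ∃ x ∈ X, ∃ y ∈ Y, x.last = y.first ∧ z = ⟨x.pairs ++ y.pairs, y.last⟩}

/-- The set of atoms, viewed as guarded strings. -/
def atomsGS : Set (GStr T A) := {z | z.pairs = []}

/-- Fusion powers: `X⁰ = At`, `X^{n+1} = X ⋄ Xⁿ`. -/
def fpow (X : Set (GStr T A)) : ℕ → Set (GStr T A)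
  | 0 => atomsGS
  | n + 1 => fprod X (fpow X n)

/-- `X* = ∪ₙ Xⁿ`. -/
def fstar (X : Set (GStr T A)) : Set (GStr T A) := ⋃ n, fpow X n

/-- Derivative of a set of guarded strings w.r.t. `αp`. -/
def gderiv (α : Atom T) (p : A) (R : Set (GStr T A)) : Set (GStr T A) :=
  {y | (⟨(α, p) :: y.pairs, y.last⟩ : GStr T A) ∈ R}

/-- Boolean expressions over primitive tests `T`. -/
inductive BExp (T : Type) where
  | zero | one
  | test (t : T)
  | not (b : BExp T)
  | or (b₁ b₂ : BExp T)
  | and (b₁ b₂ : BExp T)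

/-- Evaluation of a Boolean expression at an atom (`α ≤ b`). -/
def BExp.eval (α : Atom T) : BExp T → Bool
  | .zero => false
  | .one => true
  | .test t => α t
  | .not b => !(b.eval α)
  | .or b₁ b₂ => b₁.eval α || b₂.eval α
  | .and b₁ b₂ => b₁.eval α && b₂.eval α

/-- KAT expressions over actions `Σ = A` and tests `T`. -/
inductive KExp (T A : Type) where
  | act (p : A)
  | test (b : BExp T)
  | plus (e₁ e₂ : KExp T A)
  | cat (e₁ e₂ : KExp T A)
  | star (e : KExp T A)

/-- Guarded-string semantics of a KAT expression. -/
def gs : KExp T A → Set (GStr T A)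
  | .act p => {z | ∃ α β, z = ⟨[(α, p)], β⟩}
  | .test b => {z | z.pairs = [] ∧ b.eval z.last = true}
  | .plus e₁ e₂ => gs e₁ ∪ gs e₂
  | .cat e₁ e₂ => fprod (gs e₁) (gs e₂)
  | .star e => fstar (gs e)

/-- Syntactic evaluation `E_α`. -/
def Eps (α : Atom T) : KExp T A → Bool
  | .act _ => false
  | .test b => b.eval α
  | .plus e₁ e₂ => Eps α e₁ || Eps α e₂
  | .cat e₁ e₂ => Eps α e₁ && Eps α e₂
  | .star _ => true

/-- `Γ · e`, with `Γ·0 = ∅` and `Γ·1 = Γ`. -/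
def prodSet (Γ : Set (KExp T A)) : KExp T A → Set (KExp T A)
  | .test .zero => ∅
  | .test .one => Γ
  | e => {x | ∃ e' ∈ Γ, x = .cat e' e}

/-- Partial derivatives `Δ_{αp}(e)`. -/
def pd (α : Atom T) (p : A) : KExp T A → Set (KExp T A)
  | .act p' => if p = p' then {.test .one} else ∅
  | .test _ => ∅
  | .plus e₁ e₂ => pd α p e₁ ∪ pd α p e₂
  | .cat e₁ e₂ => prodSet (pd α p e₁) e₂ ∪ (if Eps α e₁ then pd α p e₂ else ∅)
  | .star e => prodSet (pd α p e) (.star e)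

/-- Guarded-string semantics of a set of expressions. -/
def gsSet (E : Set (KExp T A)) : Set (GStr T A) := ⋃ e ∈ E, gs e

/-- Partial derivative of a set of expressions. -/
def pdS (α : Atom T) (p : A) (E : Set (KExp T A)) : Set (KExp T A) :=
  ⋃ e ∈ E, pd α p e

/-- Iterated partial derivative `Δ̂_w(e)` along a word `w ∈ (At·Σ)*`. -/
def pdWord (w : List (Atom T × A)) (e : KExp T A) : Set (KExp T A) :=
  w.foldl (fun E x => pdS x.1 x.2 E) {e}

/-- The closure `PD(e)`. -/
def PD : KExp T A → Set (KExp T A)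
  | .test b => {.test b}
  | .act p => {.act p, .test .one}
  | .plus e₁ e₂ => {.plus e₁ e₂} ∪ PD e₁ ∪ PD e₂
  | .cat e₁ e₂ => {.cat e₁ e₂} ∪ prodSet (PD e₁) e₂ ∪ PD e₂
  | .star e => {.star e} ∪ prodSet (PD e) (.star e)

/-- Number of symbols in the syntactic tree of a Boolean expression. -/
def BExp.size : BExp T → ℕ
  | .zero => 1 | .one => 1 | .test _ => 1
  | .not b => b.size + 1
  | .or b₁ b₂ => b₁.size + b₂.size + 1
  | .and b₁ b₂ => b₁.size + b₂.size + 1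

/-- Number of symbols in the syntactic tree of a KAT expression. -/
def KExp.size : KExp T A → ℕ
  | .act _ => 1
  | .test b => b.size
  | .plus e₁ e₂ => e₁.size + e₂.size + 1
  | .cat e₁ e₂ => e₁.size + e₂.size + 1
  | .star e => e.size + 1

/-- A set of assumptions `Γ`: equations `b p b̄' = 0` and inequalities `c ≤ c'`. -/
structure Gamma (T A : Type) where
  eqns : List (BExp T × A × BExp T)
  ineqs : List (BExp T × BExp T)

/-- `α ∈ At^Γ`. -/
def inAtG (G : Gamma T A) (α : Atom T) : Bool :=
  G.ineqs.all fun cc => !(cc.1.eval α) || cc.2.eval α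

/-- The atoms of `At^Γ`, viewed as guarded strings. -/
def atomsG (G : Gamma T A) : Set (GStr T A) := {z | z.pairs = [] ∧ inAtG G z.last = true}

/-- Γ-restricted fusion powers (base case `At^Γ`). -/
def fpowG (G : Gamma T A) (X : Set (GStr T A)) : ℕ → Set (GStr T A)
  | 0 => atomsG G
  | n + 1 => fprod X (fpowG G X n)

def fstarG (G : Gamma T A) (X : Set (GStr T A)) : Set (GStr T A) := ⋃ n, fpowG G X n

/-- The Γ-restricted guarded-string semantics `GS^Γ`. -/
def gsG (G : Gamma T A) : KExp T A → Set (GStr T A)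
  | .act p => {z | ∃ α β, inAtG G α = true ∧ inAtG G β = true ∧
      (∀ x ∈ G.eqns, x.2.1 = p → x.1.eval α = true → x.2.2.eval β = true) ∧
      z = ⟨[(α, p)], β⟩}
  | .test b => {z | z.pairs = [] ∧ inAtG G z.last = true ∧ b.eval z.last = true}
  | .plus e₁ e₂ => gsG G e₁ ∪ gsG G e₂
  | .cat e₁ e₂ => fprod (gsG G e₁) (gsG G e₂)
  | .star e => fstarG G (gsG G e)

def gsSetG (G : Gamma T A) (E : Set (KExp T A)) : Set (GStr T A) := ⋃ e ∈ E, gsG G e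

/-- Sum of a list of KAT expressions. -/
def sumList (l : List (KExp T A)) : KExp T A := l.foldr .plus (.test .zero)

/-- The universal expression `u = (p₁ + ⋯ + p_k)*`. -/
def uExp (ps : List A) : KExp T A := .star (sumList (ps.map .act))

/-- `r = Σᵢ bᵢpᵢb̄ᵢ' + Σⱼ cⱼc̄ⱼ'`. -/
def rExp (G : Gamma T A) : KExp T A :=
  sumList
    (G.eqns.map (fun x => .cat (.cat (.test x.1) (.act x.2.1)) (.test (.not x.2.2))) ++
     G.ineqs.map (fun x => .cat (.test x.1) (.test (.not x.2))))

/-- The expression `u r u`. -/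
def uru (G : Gamma T A) (ps : List A) : KExp T A :=
  .cat (.cat (uExp ps) (rExp G)) (uExp ps)

/-- `Π{b' | (b p b̄' = 0) ∈ Γ, α ≤ b}` (equal to `1` if there are none). -/
def gammaProd (G : Gamma T A) (α : Atom T) (p : A) : BExp T :=
  ((G.eqns.filter fun x => decide (x.2.1 = p) && x.1.eval α).map fun x => x.2.2).foldr .and .one

def pdGaux (G : Gamma T A) (α : Atom T) (p : A) : KExp T A → Set (KExp T A)
  | .act p' => if p = p' then {.test (gammaProd G α p)} else ∅
  | .test _ => ∅
  | .plus e₁ e₂ => pdGaux G α p e₁ ∪ pdGaux G α p e₂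
  | .cat e₁ e₂ => prodSet (pdGaux G α p e₁) e₂ ∪ (if Eps α e₁ then pdGaux G α p e₂ else ∅)
  | .star e => prodSet (pdGaux G α p e) (.star e)

/-- The Γ-partial derivative `Δ^Γ_{αp}(e)`. -/
def pdG (G : Gamma T A) (α : Atom T) (p : A) (e : KExp T A) : Set (KExp T A) :=
  if inAtG G α then pdGaux G α p e else ∅

/-- The atoms occurring in a guarded string. -/
def atomsOf (x : GStr T A) : List (Atom T) := x.pairs.map Prod.fst ++ [x.last]

/-- The substrings `α p β` of a guarded string. -/
def triplesOf (x : GStr T A) : List (Atom T × A × Atom T) :=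
  List.zipWith (fun ap β => (ap.1, ap.2, β)) x.pairs
    ((x.pairs.map Prod.fst).drop 1 ++ [x.last])

/-- `Γ·e` on transition pairs, with `Γ·0 = ∅` and `Γ·1 = Γ`. -/
def prodPairs (Γ : Set ((Atom T × A) × KExp T A)) :
    KExp T A → Set ((Atom T × A) × KExp T A)
  | .test .zero => ∅
  | .test .one => Γ
  | e => {x | ∃ y ∈ Γ, x = (y.1, .cat y.2 e)}

/-- The transition function `𝖿`. -/
def fset : KExp T A → Set ((Atom T × A) × KExp T A)
  | .act p => {x | ∃ α : Atom T, x = ((α, p), .test .one)}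
  | .test _ => ∅
  | .plus e₁ e₂ => fset e₁ ∪ fset e₂
  | .cat e₁ e₂ => prodPairs (fset e₁) e₂ ∪ {x ∈ fset e₂ | Eps x.1.1 e₁ = true}
  | .star e => prodPairs (fset e) (.star e)

/-- `der_{αp}(e) = {e' | (αp, e') ∈ 𝖿(e)}`. -/
def der (α : Atom T) (p : A) (e : KExp T A) : Set (KExp T A) :=
  {e' | ((α, p), e') ∈ fset e}

end KAT

set_option linter.unusedSectionVars false

namespace KAT

variable {T A : Type} [DecidableEq A]

lemma prodSet_one (Γ : Set (KExp T A)) : prodSet Γ (.test .one) = Γ := rfl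

lemma prodSet_mono {Γ Γ' : Set (KExp T A)} (h : Γ ⊆ Γ') (e : KExp T A) :
    prodSet Γ e ⊆ prodSet Γ' e := by
  cases e with
  | test b =>
    cases b <;> simp only [prodSet] <;>
      first
        | exact Set.empty_subset _
        | exact h
        | (rintro x ⟨e', he', rfl⟩; exact ⟨e', h he', rfl⟩)
  | _ => rintro x ⟨e', he', rfl⟩ <;> exact ⟨e', h he', rfl⟩

lemma mem_prodSet {Γ : Set (KExp T A)} {e x : KExp T A} (hx : x ∈ prodSet Γ e) :
    (e = .test .one ∧ x ∈ Γ) ∨ ∃ e' ∈ Γ, x = .cat e' e := by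
  cases e with
  | test b =>
    cases b <;> simp only [prodSet] at hx <;>
      first
        | exact absurd hx (Set.notMem_empty x)
        | exact Or.inl ⟨rfl, hx⟩
        | exact Or.inr hx
  | _ => exact Or.inr hx

lemma prodSet_finite {Γ : Set (KExp T A)} (h : Γ.Finite) (e : KExp T A) :
    (prodSet Γ e).Finite := by
  have : prodSet Γ e ⊆ Γ ∪ (fun e' => KExp.cat e' e) '' Γ := by
    intro x hx
    rcases mem_prodSet hx with ⟨_, hx⟩ | ⟨e', he', rfl⟩
    · exact Or.inl hx
    · exact Or.inr ⟨e', he', rfl⟩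
  exact (h.union (h.image _)).subset this

lemma PD_finite (e : KExp T A) : (PD e).Finite := by
  induction e with
  | act p => exact (Set.finite_singleton _).insert _
  | test b => exact Set.finite_singleton _
  | plus e₁ e₂ ih₁ ih₂ => exact ((Set.finite_singleton _).union ih₁).union ih₂
  | cat e₁ e₂ ih₁ ih₂ =>
    exact ((Set.finite_singleton _).union (prodSet_finite ih₁ e₂)).union ih₂
  | star e ih => exact (Set.finite_singleton _).union (prodSet_finite ih _)

lemma self_mem_PD (e : KExp T A) : e ∈ PD e := by
  cases e <;> simp [PD]

lemma pd_closure (α : Atom T) (p : A) :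
    ∀ e : KExp T A, ∀ e' ∈ PD e, pd α p e' ⊆ PD e := by
  intro e
  induction e with
  | act q =>
    intro e' he'
    rcases he' with rfl | rfl
    · simp only [pd]
      split
      · intro x hx; exact Or.inr hx
      · exact Set.empty_subset _
    · exact Set.empty_subset _
  | test b =>
    intro e' he'
    rcases he' with rfl
    exact Set.empty_subset _
  | plus e₁ e₂ ih₁ ih₂ =>
    intro e' he'
    rcases he' with (rfl | h1) | h2
    · simp only [pd]
      exact Set.union_subset
        (Set.subset_union_of_subset_left (Set.subset_union_of_subset_right
          (ih₁ e₁ (self_mem_PD e₁)) _) _)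
        (Set.subset_union_of_subset_right (ih₂ e₂ (self_mem_PD e₂)) _)
    · exact (ih₁ e' h1).trans
        (Set.subset_union_of_subset_left (Set.subset_union_right) _)
    · exact (ih₂ e' h2).trans Set.subset_union_right
  | cat e₁ e₂ ih₁ ih₂ =>
    intro e' he'
    have hsub2 : PD e₂ ⊆ PD (KExp.cat e₁ e₂) := Set.subset_union_right
    have hsubp : prodSet (PD e₁) e₂ ⊆ PD (KExp.cat e₁ e₂) :=
      Set.subset_union_of_subset_left Set.subset_union_right _
    rcases he' with (rfl | h1) | h2
    · simp only [pd]
      apply Set.union_subset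
      · exact (prodSet_mono (ih₁ e₁ (self_mem_PD e₁)) e₂).trans hsubp
      · split
        · exact (ih₂ e₂ (self_mem_PD e₂)).trans hsub2
        · exact Set.empty_subset _
    · rcases mem_prodSet h1 with ⟨heq, hmem⟩ | ⟨e₁', he₁', rfl⟩
      · subst heq
        refine (ih₁ e' hmem).trans ?_
        rw [← prodSet_one (PD e₁)]
        exact hsubp
      · simp only [pd]
        apply Set.union_subset
        · exact (prodSet_mono (ih₁ e₁' he₁') e₂).trans hsubp
        · split
          · exact (ih₂ e₂ (self_mem_PD e₂)).trans hsub2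
          · exact Set.empty_subset _
    · exact (ih₂ e' h2).trans hsub2
  | star e ih =>
    intro e' he'
    have hsubp : prodSet (PD e) (.star e) ⊆ PD (KExp.star e) :=
      Set.subset_union_right
    rcases he' with rfl | h1
    · simp only [pd]
      exact (prodSet_mono (ih e (self_mem_PD e)) _).trans hsubp
    · rcases mem_prodSet h1 with ⟨heq, _⟩ | ⟨e₁', he₁', rfl⟩
      · exact absurd heq (by simp)
      · simp only [pd]
        apply Set.union_subset
        · exact (prodSet_mono (ih e₁' he₁') _).trans hsubp
        · split
          · exact (prodSet_mono (ih e (self_mem_PD e)) _).trans hsubp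
          · exact Set.empty_subset _

lemma pdWord_subset_PD (e : KExp T A) (w : List (Atom T × A)) :
    pdWord w e ⊆ PD e := by
  suffices h : ∀ w : List (Atom T × A), ∀ E : Set (KExp T A), E ⊆ PD e →
      w.foldl (fun E x => pdS x.1 x.2 E) E ⊆ PD e by
    exact h w {e} (by simpa using self_mem_PD e)
  intro w
  induction w with
  | nil => intro E hE; simpa using hE
  | cons x w ih =>
    intro E hE
    refine ih _ ?_
    intro y hy
    simp only [pdS, Set.mem_iUnion] at hy
    obtain ⟨e', he', hy⟩ := hy
    exact pd_closure x.1 x.2 e e' (hE he') hy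

end KAT

open KAT in
/-- The set of all partial derivatives of `e` by all words is finite. -/
theorem finite_pdWord_union {T A : Type} [DecidableEq A] (e : KExp T A) :
    (⋃ x : List (Atom T × A), pdWord x e).Finite := by
  exact (PD_finite e).subset (Set.iUnion_subset fun x => pdWord_subset_PD e x)
end

section
/- Let Γ be a set of assumptions of the form {b₁p₁b̄₁'=0, ..., b_mp_mb̄_m'=0} ∪ {c₁ ≤ c₁', ..., cₙ ≤ cₙ'}. For KAT expressions e₁, e₂: the implication (all assumptions in Γ) → e₁ = e₂ holds in the guarded-string model (equivalently, is a theorem of KAT) if and only if GS^Γ(e₁) = GS^Γ(e₂). -/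
namespace KAT

variable {T A : Type} [DecidableEq A]

/-- The transition `α p β` is allowed by the equational assumptions. -/
def okT (G : Gamma T A) (α : Atom T) (p : A) (β : Atom T) : Prop :=
  ∀ x ∈ G.eqns, x.2.1 = p → x.1.eval α = true → x.2.2.eval β = true

/-- First atom of a pairs-list, with default `β`. -/
def firstA : List (Atom T × A) → Atom T → Atom T
  | [], β => β
  | (α, _) :: _, _ => α

/-- All atoms of the pairs list (ending with `β`) are in `At^Γ` and all
transitions are allowed. -/
def GoodP (G : Gamma T A) : List (Atom T × A) → Atom T → Prop
  | [], β => inAtG G β = true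
  | (α, p) :: l, β => inAtG G α = true ∧ okT G α p (firstA l β) ∧ GoodP G l β

/-- A guarded string is Γ-consistent. -/
def Good (G : Gamma T A) (x : GStr T A) : Prop := GoodP G x.pairs x.last

lemma firstA_append (l₁ l₂ : List (Atom T × A)) (β : Atom T) :
    firstA (l₁ ++ l₂) β = firstA l₁ (firstA l₂ β) := by
  cases l₁ with
  | nil => rfl
  | cons a l => cases a; rfl

lemma goodP_append (G : Gamma T A) (l₁ l₂ : List (Atom T × A)) (β : Atom T) :
    GoodP G (l₁ ++ l₂) β ↔ GoodP G l₁ (firstA l₂ β) ∧ GoodP G l₂ β := by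
  induction l₁ with
  | nil =>
    simp only [List.nil_append, GoodP]
    cases l₂ with
    | nil => simp [firstA, GoodP]
    | cons a l =>
      cases a with
      | mk α p =>
        simp only [firstA, GoodP]
        tauto
  | cons a l ih =>
    cases a with
    | mk α p =>
      simp only [List.cons_append, GoodP, firstA_append, ih, List.append_eq]
      tauto

lemma first_eq (x : GStr T A) : x.first = firstA x.pairs x.last := by
  cases x with
  | mk l β =>
    cases l with
    | nil => rfl
    | cons a l => cases a; rfl

lemma fprod_good (G : Gamma T A) (X Y : Set (GStr T A)) :
    fprod {x ∈ X | Good G x} {y ∈ Y | Good G y} = {z ∈ fprod X Y | Good G z} := by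
  ext z
  constructor
  · rintro ⟨x, ⟨hx, hgx⟩, y, ⟨hy, hgy⟩, hlast, rfl⟩
    refine ⟨⟨x, hx, y, hy, hlast, rfl⟩, ?_⟩
    show GoodP G (x.pairs ++ y.pairs) y.last
    rw [goodP_append]
    refine ⟨?_, hgy⟩
    rwa [← first_eq, ← hlast]
  · rintro ⟨⟨x, hx, y, hy, hlast, rfl⟩, hg⟩
    have hg' : GoodP G (x.pairs ++ y.pairs) y.last := hg
    rw [goodP_append] at hg'
    refine ⟨x, ⟨hx, ?_⟩, y, ⟨hy, hg'.2⟩, hlast, rfl⟩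
    show GoodP G x.pairs x.last
    rw [hlast, first_eq y]
    exact hg'.1

lemma atomsG_eq (G : Gamma T A) :
    atomsG G = {z ∈ atomsGS | Good G z} := by
  ext z
  simp only [atomsG, atomsGS, Set.mem_setOf_eq, Set.mem_sep_iff]
  constructor
  · rintro ⟨h1, h2⟩
    refine ⟨h1, ?_⟩
    show GoodP G z.pairs z.last
    rw [h1]; exact h2
  · rintro ⟨h1, h2⟩
    have h2' : GoodP G z.pairs z.last := h2
    rw [h1] at h2'
    exact ⟨h1, h2'⟩

lemma fpowG_eq (G : Gamma T A) (X : Set (GStr T A)) (n : ℕ) :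
    fpowG G {x ∈ X | Good G x} n = {z ∈ fpow X n | Good G z} := by
  induction n with
  | zero => exact atomsG_eq G
  | succ n ih =>
    show fprod _ (fpowG G _ n) = _
    rw [ih, fprod_good]
    rfl

lemma gsG_eq (G : Gamma T A) (e : KExp T A) :
    gsG G e = {x ∈ gs e | Good G x} := by
  induction e with
  | act p =>
    ext z
    simp only [gsG, gs, Set.mem_setOf_eq, Set.mem_sep_iff]
    constructor
    · rintro ⟨α, β, h1, h2, h3, rfl⟩
      exact ⟨⟨α, β, rfl⟩, ⟨h1, h3, h2⟩⟩
    · rintro ⟨⟨α, β, rfl⟩, hα, hok, hβ⟩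
      exact ⟨α, β, hα, hβ, hok, rfl⟩
  | test b =>
    ext z
    simp only [gsG, gs, Set.mem_setOf_eq, Set.mem_sep_iff]
    constructor
    · rintro ⟨h1, h2, h3⟩
      refine ⟨⟨h1, h3⟩, ?_⟩
      show GoodP G z.pairs z.last
      rw [h1]; exact h2
    · rintro ⟨⟨h1, h3⟩, h2⟩
      have h2' : GoodP G z.pairs z.last := h2
      rw [h1] at h2'
      exact ⟨h1, h2', h3⟩
  | plus e₁ e₂ ih₁ ih₂ =>
    show gsG G e₁ ∪ gsG G e₂ = _
    rw [ih₁, ih₂]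
    ext z
    simp only [gs, Set.mem_union, Set.mem_sep_iff, Set.mem_setOf_eq]
    tauto
  | cat e₁ e₂ ih₁ ih₂ =>
    show fprod (gsG G e₁) (gsG G e₂) = _
    rw [ih₁, ih₂, fprod_good]
    rfl
  | star e ih =>
    show fstarG G (gsG G e) = _
    rw [ih]
    ext z
    simp only [fstarG, Set.mem_iUnion, fpowG_eq, Set.mem_sep_iff, gs, fstar]
    constructor
    · rintro ⟨n, hn, hg⟩
      exact ⟨⟨n, hn⟩, hg⟩
    · rintro ⟨⟨n, hn⟩, hg⟩
      exact ⟨n, hn, hg⟩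

lemma mem_gs_sumList (l : List (KExp T A)) (x : GStr T A) :
    x ∈ gs (sumList l) ↔ ∃ e ∈ l, x ∈ gs e := by
  induction l with
  | nil => simp [sumList, gs, BExp.eval]
  | cons e t ih =>
    show x ∈ gs (.plus e (sumList t)) ↔ _
    simp only [gs, Set.mem_union, ih, List.mem_cons]
    constructor
    · rintro (h | ⟨e', he', hx⟩)
      · exact ⟨e, Or.inl rfl, h⟩
      · exact ⟨e', Or.inr he', hx⟩
    · rintro ⟨e', (rfl | he'), hx⟩
      · exact Or.inl hx
      · exact Or.inr ⟨e', he', hx⟩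

lemma gs_uExp (ps : List A) (hps : ∀ p : A, p ∈ ps) :
    gs (uExp ps) = (Set.univ : Set (GStr T A)) := by
  ext x
  simp only [Set.mem_univ, iff_true]
  show x ∈ fstar (gs (sumList (ps.map .act)))
  have key : ∀ (l : List (Atom T × A)) (β : Atom T),
      (⟨l, β⟩ : GStr T A) ∈ fpow (gs (sumList (ps.map .act))) l.length := by
    intro l
    induction l with
    | nil => intro β; exact rfl
    | cons a t ih =>
      intro β
      cases a with
      | mk α p =>
        refine ⟨⟨[(α, p)], firstA t β⟩, ?_, ⟨t, β⟩, ih β, ?_, rfl⟩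
        · rw [mem_gs_sumList]
          exact ⟨.act p, List.mem_map_of_mem (hps p), α, firstA t β, rfl⟩
        · rw [first_eq]
  rcases x with ⟨l, β⟩
  exact Set.mem_iUnion.mpr ⟨l.length, key l β⟩

lemma mem_gs_eqn (b b' : BExp T) (p : A) (x : GStr T A) :
    x ∈ gs (.cat (.cat (.test b) (.act p)) (.test (.not b'))) ↔
      ∃ α β, b.eval α = true ∧ b'.eval β = false ∧ x = ⟨[(α, p)], β⟩ := by
  constructor
  · rintro ⟨y, ⟨z, ⟨hz, hbz⟩, w, ⟨γ, δ, rfl⟩, hlz, rfl⟩, v, ⟨hv, hbv⟩, hl, rfl⟩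
    rw [first_eq] at hlz
    simp only [firstA] at hlz
    rw [first_eq, hv] at hl
    simp only [firstA] at hl
    refine ⟨γ, v.last, ?_, ?_, ?_⟩
    · rw [← hlz]; exact hbz
    · simp only [BExp.eval, Bool.not_eq_true'] at hbv
      exact hbv
    · simp [hz, hv]
  · rintro ⟨α, β, hα, hβ, rfl⟩
    exact ⟨⟨[(α, p)], β⟩, ⟨⟨[], α⟩, ⟨rfl, hα⟩, ⟨[(α, p)], β⟩, ⟨α, β, rfl⟩, rfl, by simp⟩,
      ⟨[], β⟩, ⟨rfl, by simp [BExp.eval, hβ]⟩, rfl, by simp⟩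

lemma mem_gs_ineq (c c' : BExp T) (x : GStr T A) :
    x ∈ gs (.cat (.test c) (.test (.not c'))) ↔
      x.pairs = [] ∧ c.eval x.last = true ∧ c'.eval x.last = false := by
  constructor
  · rintro ⟨y, ⟨hy, hcy⟩, z, ⟨hz, hcz⟩, hl, rfl⟩
    rw [first_eq, hz] at hl
    simp only [firstA] at hl
    simp only [BExp.eval, Bool.not_eq_true'] at hcz
    refine ⟨by simp [hy, hz], ?_, hcz⟩
    rw [← hl]; exact hcy
  · rintro ⟨h1, h2, h3⟩
    rcases x with ⟨l, β⟩
    simp only at h1 h2 h3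
    subst h1
    exact ⟨⟨[], β⟩, ⟨rfl, h2⟩, ⟨[], β⟩, ⟨rfl, by simp [BExp.eval, h3]⟩, rfl, by simp⟩

lemma mem_gs_rExp (G : Gamma T A) (x : GStr T A) :
    x ∈ gs (rExp G) ↔
      (∃ t ∈ G.eqns, ∃ α β, t.1.eval α = true ∧ t.2.2.eval β = false ∧
        x = ⟨[(α, t.2.1)], β⟩) ∨
      (∃ c ∈ G.ineqs, x.pairs = [] ∧ c.1.eval x.last = true ∧ c.2.eval x.last = false) := by
  rw [rExp, mem_gs_sumList]
  constructor
  · rintro ⟨e, he, hx⟩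
    rw [List.mem_append] at he
    rcases he with he | he
    · rcases List.mem_map.mp he with ⟨t, ht, rfl⟩
      rw [mem_gs_eqn] at hx
      rcases hx with ⟨α, β, h1, h2, rfl⟩
      exact Or.inl ⟨t, ht, α, β, h1, h2, rfl⟩
    · rcases List.mem_map.mp he with ⟨c, hc, rfl⟩
      rw [mem_gs_ineq] at hx
      exact Or.inr ⟨c, hc, hx⟩
  · rintro (⟨t, ht, α, β, h1, h2, rfl⟩ | ⟨c, hc, h⟩)
    · refine ⟨_, List.mem_append_left _ (List.mem_map_of_mem ht), ?_⟩
      rw [mem_gs_eqn]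
      exact ⟨α, β, h1, h2, rfl⟩
    · refine ⟨_, List.mem_append_right _ (List.mem_map_of_mem hc), ?_⟩
      rw [mem_gs_ineq]
      exact h

lemma inAtG_false (G : Gamma T A) (γ : Atom T) (h : inAtG G γ = false) :
    ∃ c ∈ G.ineqs, c.1.eval γ = true ∧ c.2.eval γ = false := by
  simp only [inAtG, List.all_eq_false, Bool.not_eq_true, Bool.or_eq_false_iff,
    Bool.not_eq_false] at h
  obtain ⟨c, hc, h1, h2⟩ := h
  exact ⟨c, hc, by simpa using h1, h2⟩

lemma badFind (G : Gamma T A) :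
    ∀ (l : List (Atom T × A)) (β : Atom T), ¬ GoodP G l β →
      (∃ l₁ l₂, l = l₁ ++ l₂ ∧ inAtG G (firstA l₂ β) = false) ∨
      (∃ l₁ α p l₂, l = l₁ ++ (α, p) :: l₂ ∧ ¬ okT G α p (firstA l₂ β)) := by
  intro l
  induction l with
  | nil =>
    intro β h
    exact Or.inl ⟨[], [], rfl, by simpa [GoodP, firstA] using h⟩
  | cons a t ih =>
    intro β h
    cases a with
    | mk α p =>
      by_cases h1 : inAtG G α = true
      · by_cases h2 : okT G α p (firstA t β)
        · have h3 : ¬ GoodP G t β := fun hg => h ⟨h1, h2, hg⟩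
          rcases ih β h3 with ⟨l₁, l₂, rfl, hbad⟩ | ⟨l₁, α', p', l₂, rfl, hbad⟩
          · exact Or.inl ⟨(α, p) :: l₁, l₂, rfl, hbad⟩
          · exact Or.inr ⟨(α, p) :: l₁, α', p', l₂, rfl, hbad⟩
        · exact Or.inr ⟨[], α, p, t, rfl, h2⟩
      · exact Or.inl ⟨[], (α, p) :: t, rfl, by simpa [firstA] using h1⟩

lemma gs_uru_eq (G : Gamma T A) (ps : List A) (hps : ∀ p : A, p ∈ ps) :
    gs (uru G ps) = {x : GStr T A | ¬ Good G x} := by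
  have huru : gs (uru G ps) = fprod (fprod Set.univ (gs (rExp G))) Set.univ := by
    show fprod (fprod (gs (uExp ps)) (gs (rExp G))) (gs (uExp ps)) = _
    rw [gs_uExp ps hps]
  rw [huru]
  ext z
  simp only [Set.mem_setOf_eq]
  constructor
  · rintro ⟨y, ⟨x₁, -, m, hm, hl1, rfl⟩, x₂, -, hl2, rfl⟩ hg
    have hg' : GoodP G (x₁.pairs ++ m.pairs ++ x₂.pairs) x₂.last := hg
    rw [goodP_append, goodP_append] at hg'
    have hgm : GoodP G m.pairs (firstA x₂.pairs x₂.last) := hg'.1.2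
    rw [first_eq] at hl2
    rw [mem_gs_rExp] at hm
    rcases hm with ⟨t, ht, α, β, h1, h2, hmeq⟩ | ⟨c, hc, h1, h2, h3⟩
    · subst hmeq
      have hok : okT G α t.2.1 (firstA x₂.pairs x₂.last) := hgm.2.1
      have hβ : β = firstA x₂.pairs x₂.last := hl2
      rw [hβ, hok t ht rfl h1] at h2
      simp at h2
    · rw [h1] at hgm
      have hin : inAtG G (firstA x₂.pairs x₂.last) = true := hgm
      have hml : m.last = firstA x₂.pairs x₂.last := hl2
      rw [← hml] at hin
      simp only [inAtG, List.all_eq_true] at hin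
      have := hin c hc
      rw [h2, h3] at this
      simp at this
  · intro hg
    rcases badFind G z.pairs z.last hg with ⟨l₁, l₂, hsplit, hbad⟩ | ⟨l₁, α, p, l₂, hsplit, hbad⟩
    · rcases inAtG_false G _ hbad with ⟨c, hc, h1, h2⟩
      refine ⟨⟨l₁ ++ [], firstA l₂ z.last⟩,
        ⟨⟨l₁, firstA l₂ z.last⟩, trivial, ⟨[], firstA l₂ z.last⟩, ?_, ?_, rfl⟩,
        ⟨l₂, z.last⟩, trivial, ?_, ?_⟩
      · rw [mem_gs_rExp]
        exact Or.inr ⟨c, hc, rfl, h1, h2⟩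
      · rfl
      · rw [first_eq]
      · rcases z with ⟨lz, βz⟩
        simp only at hsplit
        subst hsplit
        simp
    · have hbad' : ∃ t ∈ G.eqns, t.2.1 = p ∧ t.1.eval α = true ∧
          t.2.2.eval (firstA l₂ z.last) = false := by
        by_contra hcon
        push_neg at hcon
        apply hbad
        intro t ht h1 h2
        have := hcon t ht h1 h2
        simpa using this
      rcases hbad' with ⟨t, ht, hteq, h1, h2⟩
      refine ⟨⟨l₁ ++ [(α, p)], firstA l₂ z.last⟩,
        ⟨⟨l₁, α⟩, trivial, ⟨[(α, p)], firstA l₂ z.last⟩, ?_, ?_, rfl⟩,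
        ⟨l₂, z.last⟩, trivial, ?_, ?_⟩
      · rw [mem_gs_rExp]
        exact Or.inl ⟨t, ht, α, firstA l₂ z.last, h1, h2, by rw [hteq]⟩
      · rfl
      · rw [first_eq]
      · rcases z with ⟨lz, βz⟩
        simp only at hsplit
        subst hsplit
        simp

end KAT

open KAT in
/-- `KAT, Γ ⊢ e₁ = e₂` (equivalently, `e₁ + uru = e₂ + uru` in the
guarded-string model) iff `GS^Γ(e₁) = GS^Γ(e₂)`. -/
theorem gs_plus_uru_eq_iff_gsG_eq {T A : Type} [DecidableEq A]
    (G : Gamma T A) (ps : List A) (hps : ∀ p : A, p ∈ ps) (e₁ e₂ : KExp T A) :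
    gs (.plus e₁ (uru G ps)) = gs (.plus e₂ (uru G ps)) ↔ gsG G e₁ = gsG G e₂ := by
  have h1 : gs (KExp.plus e₁ (uru G ps)) = gs e₁ ∪ {x | ¬ Good G x} := by
    show gs e₁ ∪ gs (uru G ps) = _
    rw [gs_uru_eq G ps hps]
  have h2 : gs (KExp.plus e₂ (uru G ps)) = gs e₂ ∪ {x | ¬ Good G x} := by
    show gs e₂ ∪ gs (uru G ps) = _
    rw [gs_uru_eq G ps hps]
  rw [h1, h2, gsG_eq, gsG_eq]
  constructor
  · intro h
    ext x
    have hx := Set.ext_iff.mp h x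
    simp only [Set.mem_union, Set.mem_setOf_eq, Set.mem_sep_iff] at *
    tauto
  · intro h
    ext x
    have hx := Set.ext_iff.mp h x
    simp only [Set.mem_union, Set.mem_setOf_eq, Set.mem_sep_iff] at *
    tauto
end
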